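/- arXiv:2101.01253 — 4 statements merged into one kernel-verified Lean document; each statement's English description precedes it below -/
import Mathlib

section
/- Let (X, 𝒳) be a measurable space, μ a σ-finite measure on X, and φ : X → X a measurable map with φ ∘ φ = id. Suppose the pushforward measure μ^φ := μ ∘ φ⁻¹ and μ are mutually absolutely continuous, and let r be a measurable version of the Radon–Nikodym derivative dμ^φ/dμ. Then r(x) · r(φ(x)) = 1 for μ-almost every x ∈ X. -/
open MeasureTheory
open scoped ENNReal

/-- Let `μ` be a σ-finite measure on `X` and `φ : X → X` a measurable
involution (`φ ∘ φ = id`). Suppose the pushforward `μ.map φ` and `μ` are mutually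
absolutely continuous, and let `r` be a measurable version of the Radon–Nikodym
derivative `d(μ.map φ)/dμ` (in the sense that `∫⁻ x in A, r x ∂μ = (μ.map φ) A` for
every measurable set `A`). Then `r x * r (φ x) = 1` for `μ`-almost every `x`. -/
theorem reciprocity_of_acceptance_ratio
    {X : Type*} [MeasurableSpace X] (μ : Measure X) [SigmaFinite μ]
    (φ : X → X) (hφ : Measurable φ) (hinv : φ ∘ φ = id)
    (hac₁ : μ.map φ ≪ μ) (hac₂ : μ ≪ μ.map φ)
    (r : X → ℝ≥0∞) (hr : Measurable r)
    (hrd : ∀ A : Set X, MeasurableSet A → ∫⁻ x in A, r x ∂μ = μ.map φ A) :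
    ∀ᵐ x ∂μ, r x * r (φ x) = 1 := by
  have hinv' : ∀ x, φ (φ x) = x := fun x => congrFun hinv x
  set ν := μ.map φ with hν
  -- φ as a measurable equivalence
  let e : X ≃ᵐ X :=
    { toFun := φ, invFun := φ, left_inv := hinv', right_inv := hinv',
      measurable_toFun := hφ, measurable_invFun := hφ }
  have hmape : μ.map φ = μ.map e := rfl
  have : SigmaFinite ν := by rw [hν, hmape]; exact e.sigmaFinite_map
  -- ν = μ.withDensity r
  have h₁ : ν = μ.withDensity r := by
    ext A hA
    rw [withDensity_apply _ hA, hrd A hA]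
  -- μ = ν.withDensity (r ∘ φ)
  have h₂ : μ = ν.withDensity (r ∘ φ) := by
    ext A hA
    rw [withDensity_apply _ hA, hν,
      setLIntegral_map hA (hr.comp hφ) hφ]
    simp only [Function.comp_apply, hinv']
    rw [hrd _ (hφ hA), hν, Measure.map_apply hφ (hφ hA)]
    congr 1
    ext x
    simp [hinv']
  -- r is a version of ν.rnDeriv μ
  have hr₁ : r =ᵐ[μ] ν.rnDeriv μ := by
    rw [h₁]; exact (Measure.rnDeriv_withDensity μ hr).symm
  -- r ∘ φ is a version of μ.rnDeriv ν
  have hr₂ : (r ∘ φ) =ᵐ[ν] μ.rnDeriv ν := by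
    rw [h₂]; exact (Measure.rnDeriv_withDensity ν (hr.comp hφ)).symm
  have hr₂' : (r ∘ φ) =ᵐ[μ] μ.rnDeriv ν := hac₂.ae_le hr₂
  have hmul : ν.rnDeriv μ * μ.rnDeriv ν =ᵐ[ν] ν.rnDeriv ν :=
    Measure.rnDeriv_mul_rnDeriv hac₁
  have hself : ν.rnDeriv ν =ᵐ[ν] 1 := Measure.rnDeriv_self ν
  have hmain : ν.rnDeriv μ * μ.rnDeriv ν =ᵐ[μ] 1 :=
    hac₂.ae_le (hmul.trans hself)
  filter_upwards [hr₁, hr₂', hmain] with x h1 h2 h3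
  rw [h1, show r (φ x) = (r ∘ φ) x from rfl, h2]
  exact h3
end

section
/- Let (U, 𝒰, Q) be a probability space and r : U → [0,∞) a measurable Q-integrable function. Then for every integer N ≥ 1, ∫_{U^N} min{1, N⁻¹ Σ_{i=1}^N r(u_i)} Q^{⊗N}(d(u_1,…,u_N)) ≤ ∫_{U^{N+1}} min{1, (N+1)⁻¹ Σ_{i=1}^{N+1} r(u_i)} Q^{⊗(N+1)}(d(u_1,…,u_{N+1})), i.e. the expected acceptance probability of the averaged acceptance-ratio estimator is nondecreasing in the number N of independent replicates. -/
open MeasureTheory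

private lemma integrable_of_bounded_one {α : Type*} [MeasurableSpace α] (μ : Measure α)
    [IsProbabilityMeasure μ] {h : α → ℝ} (hm : Measurable h) (hb : ∀ x, ‖h x‖ ≤ 1) :
    Integrable h μ :=
  (integrable_const (1 : ℝ)).mono' hm.aestronglyMeasurable (ae_of_all _ hb)

/-- For a probability measure `Q` on `U` and a nonnegative measurable
`Q`-integrable function `r : U → [0,∞)`, the expected Metropolis–Hastings acceptance
probability of the averaged acceptance-ratio estimator,
`∫ min{1, N⁻¹ ∑ᵢ r(uᵢ)} dQ^{⊗N}`, is nondecreasing in the number `N ≥ 1`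
of independent replicates. -/
theorem averaged_acceptance_monotone
    {U : Type*} [MeasurableSpace U] (Q : Measure U) [IsProbabilityMeasure Q]
    (r : U → ℝ) (hrm : Measurable r) (hr0 : ∀ u, 0 ≤ r u) (hri : Integrable r Q)
    (N : ℕ) (hN : 1 ≤ N) :
    ∫ u : Fin N → U, min 1 ((N : ℝ)⁻¹ * ∑ i, r (u i)) ∂(Measure.pi fun _ => Q)
      ≤ ∫ u : Fin (N + 1) → U, min 1 (((N : ℝ) + 1)⁻¹ * ∑ i, r (u i))
          ∂(Measure.pi fun _ => Q) := by
  set μ : Measure (Fin (N + 1) → U) := Measure.pi fun _ => Q with hμ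
  set ν : Measure (Fin N → U) := Measure.pi fun _ => Q with hν
  have hNpos : (0 : ℝ) < N := by exact_mod_cast hN
  have hN1pos : (0 : ℝ) < (N : ℝ) + 1 := by positivity
  -- the leave-one-out averaged acceptance probabilities
  set g : Fin (N + 1) → (Fin (N + 1) → U) → ℝ :=
    fun j u => min 1 ((N : ℝ)⁻¹ * ∑ i : Fin N, r (u (j.succAbove i))) with hg
  -- measurability of the functions involved
  have hsum_meas : ∀ (j : Fin (N + 1)),
      Measurable fun u : Fin (N + 1) → U => ∑ i : Fin N, r (u (j.succAbove i)) := by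
    intro j
    exact Finset.measurable_sum _ fun i _ => hrm.comp (measurable_pi_apply _)
  have hg_meas : ∀ j, Measurable (g j) := fun j =>
    measurable_const.min ((hsum_meas j).const_mul _)
  have hsumN1_meas : Measurable fun u : Fin (N + 1) → U => ∑ i, r (u i) :=
    Finset.measurable_sum _ fun i _ => hrm.comp (measurable_pi_apply _)
  have hsumN_meas : Measurable fun u : Fin N → U => ∑ i, r (u i) :=
    Finset.measurable_sum _ fun i _ => hrm.comp (measurable_pi_apply _)
  -- bounds on min 1 (c * s) when 0 ≤ c, 0 ≤ s
  have hminbd : ∀ (c s : ℝ), 0 ≤ c → 0 ≤ s → ‖min 1 (c * s)‖ ≤ 1 := by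
    intro c s hc hs
    rw [Real.norm_eq_abs, abs_le]
    constructor
    · have : (0:ℝ) ≤ min 1 (c * s) := le_min one_pos.le (by positivity)
      linarith
    · exact min_le_left _ _
  have hg_int : ∀ j, Integrable (g j) μ := by
    intro j
    refine integrable_of_bounded_one μ (hg_meas j) fun u => ?_
    exact hminbd _ _ (by positivity) (Finset.sum_nonneg fun i _ => hr0 _)
  -- each marginal map is measure preserving
  have hmp : ∀ j : Fin (N + 1),
      MeasurePreserving (fun u : Fin (N + 1) → U => fun i : Fin N => u (j.succAbove i)) μ ν := by
    intro j
    have h1 := measurePreserving_piFinSuccAbove (fun _ : Fin (N+1) => Q) j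
    have h2 : MeasurePreserving (Prod.snd : U × (Fin N → U) → (Fin N → U))
        (Q.prod ν) ν := by
      refine ⟨measurable_snd, ?_⟩
      rw [Measure.map_snd_prod]
      simp
    exact h2.comp h1
  -- each leave-one-out term integrates to the N-sample acceptance probability
  have hstep : ∀ j : Fin (N + 1),
      ∫ u : Fin N → U, min 1 ((N : ℝ)⁻¹ * ∑ i, r (u i)) ∂ν = ∫ u, g j u ∂μ := by
    intro j
    rw [← (hmp j).map_eq,
      integral_map (hmp j).measurable.aemeasurable
        (measurable_const.min (hsumN_meas.const_mul _)).aestronglyMeasurable]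
  -- pointwise inequality: the average of the g j is at most the (N+1)-sample acceptance prob.
  have hpt : ∀ u : Fin (N + 1) → U,
      ((N : ℝ) + 1)⁻¹ * ∑ j, g j u ≤ min 1 (((N : ℝ) + 1)⁻¹ * ∑ i, r (u i)) := by
    intro u
    set S : ℝ := ∑ i, r (u i) with hS
    have hSnn : 0 ≤ S := Finset.sum_nonneg fun i _ => hr0 _
    have hloo : ∀ j : Fin (N + 1), ∑ i : Fin N, r (u (j.succAbove i)) = S - r (u j) := by
      intro j
      have := Fin.sum_univ_succAbove (fun i => r (u i)) j
      linarith [this]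
    refine le_min ?_ ?_
    · have h1 : ∑ j, g j u ≤ ∑ _j : Fin (N + 1), (1 : ℝ) :=
        Finset.sum_le_sum fun j _ => min_le_left _ _
      rw [Finset.sum_const, Finset.card_univ, Fintype.card_fin] at h1
      rw [inv_mul_le_iff₀ hN1pos]
      simpa using h1
    · have h2 : ∑ j, g j u ≤ ∑ j : Fin (N + 1), (N : ℝ)⁻¹ * (S - r (u j)) := by
        refine Finset.sum_le_sum fun j _ => ?_
        rw [← hloo j]
        exact min_le_right _ _
      have h3 : ∑ j : Fin (N + 1), (N : ℝ)⁻¹ * (S - r (u j)) = S := by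
        rw [← Finset.mul_sum, Finset.sum_sub_distrib, Finset.sum_const, Finset.card_univ,
          Fintype.card_fin, ← hS]
        field_simp
        ring
      rw [h3] at h2
      exact mul_le_mul_of_nonneg_left h2 (by positivity)
  -- put everything together
  calc ∫ u : Fin N → U, min 1 ((N : ℝ)⁻¹ * ∑ i, r (u i)) ∂ν
      = ((N : ℝ) + 1)⁻¹ * ∑ j : Fin (N + 1),
          ∫ u : Fin N → U, min 1 ((N : ℝ)⁻¹ * ∑ i, r (u i)) ∂ν := by
        rw [Finset.sum_const, Finset.card_univ, Fintype.card_fin, nsmul_eq_mul]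
        push_cast
        rw [← mul_assoc, inv_mul_cancel₀ hN1pos.ne', one_mul]
    _ = ((N : ℝ) + 1)⁻¹ * ∑ j, ∫ u, g j u ∂μ := by
        congr 1
        exact Finset.sum_congr rfl fun j _ => hstep j
    _ = ∫ u, ((N : ℝ) + 1)⁻¹ * ∑ j, g j u ∂μ := by
        rw [← integral_finset_sum _ fun j _ => hg_int j, ← integral_const_mul]
    _ ≤ ∫ u, min 1 (((N : ℝ) + 1)⁻¹ * ∑ i, r (u i)) ∂μ := by
        refine integral_mono ?_ ?_ hpt
        · exact (integrable_finset_sum _ fun j _ => hg_int j).const_mul _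
        · refine integrable_of_bounded_one μ
            (measurable_const.min (hsumN1_meas.const_mul _)) fun u => ?_
          exact hminbd _ _ (by positivity) (Finset.sum_nonneg fun i _ => hr0 _)
end

section
/- With D, φ* and r_u as in the context: the map φ* is an involution of X := Θ² × Z × U^N × {1,…,N} × {1,2}, and for every ξ = (θ,ϑ,z,𝔲,k,c) ∈ X one has D(φ*(ξ)) = r̊(ξ) · D(ξ), where r̊(ξ) := r^N_𝔲(θ,ϑ,z) if c = 1, and r̊(ξ) := 1 / r^N_{𝔲'}(ϑ,θ,z') if c = 2, with (ϑ,θ,z',𝔲',k,1) := φ*(ξ). In particular the Metropolis–Hastings acceptance ratio of the MHAAR update equals the averaged acceptance ratio r^N_𝔲(θ,ϑ,z) when c = 1 and its reciprocal at the transformed point when c = 2. -/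
open MeasureTheory Finset

namespace MHAAR

variable {Θ Z U : Type*}

/-- The single-sample acceptance ratio `r_u(θ,ϑ,z)` associated with the joint density
`π(θ,z) q(θ,ϑ) Q(θ,ϑ,z,u)` and the involution `(θ,ϑ,z,u) ↦ (ϑ,θ,φ_{θ,ϑ}(z,u))`. -/
noncomputable def rU (π : Θ → Z → ℝ) (q : Θ → Θ → ℝ) (Q : Θ → Θ → Z → U → ℝ)
    (φ : Θ → Θ → Z × U → Z × U) (θ ϑ : Θ) (z : Z) (u : U) : ℝ :=
  π ϑ (φ θ ϑ (z, u)).1 * q ϑ θ * Q ϑ θ (φ θ ϑ (z, u)).1 (φ θ ϑ (z, u)).2 /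
    (π θ z * q θ ϑ * Q θ ϑ z u)

/-- The averaged acceptance ratio `r^N_𝔲(θ,ϑ,z) = N⁻¹ ∑ᵢ r_{u⁽ⁱ⁾}(θ,ϑ,z)`. -/
noncomputable def rAvg (N : ℕ) (π : Θ → Z → ℝ) (q : Θ → Θ → ℝ)
    (Q : Θ → Θ → Z → U → ℝ) (φ : Θ → Θ → Z × U → Z × U)
    (θ ϑ : Θ) (z : Z) (𝔲 : Fin N → U) : ℝ :=
  (N : ℝ)⁻¹ * ∑ i, rU π q Q φ θ ϑ z (𝔲 i)

/-- The density `D` of the MHAAR joint distribution `π̊` on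
`X = Θ² × Z × Uᴺ × {1,…,N} × {1,2}` (here `c = 0` codes `c = 1` and `c = 1` codes
`c = 2`). -/
noncomputable def D (N : ℕ) (π : Θ → Z → ℝ) (q : Θ → Θ → ℝ)
    (Q : Θ → Θ → Z → U → ℝ) (φ : Θ → Θ → Z × U → Z × U)
    (ξ : Θ × Θ × Z × (Fin N → U) × Fin N × Fin 2) : ℝ :=
  match ξ with
  | (θ, ϑ, z, 𝔲, k, c) =>
    2⁻¹ * π θ z * q θ ϑ *
      (if c = 0 then
        (∏ i, Q θ ϑ z (𝔲 i)) *
          ((N : ℝ)⁻¹ * rU π q Q φ θ ϑ z (𝔲 k) / rAvg N π q Q φ θ ϑ z 𝔲)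
      else
        (N : ℝ)⁻¹ * Q θ ϑ z (𝔲 k) *
          ∏ i ∈ univ.erase k, Q ϑ θ (φ θ ϑ (z, 𝔲 k)).1 (𝔲 i))

/-- The MHAAR map `φ*`. -/
noncomputable def phiStar (N : ℕ) (φ : Θ → Θ → Z × U → Z × U)
    (ξ : Θ × Θ × Z × (Fin N → U) × Fin N × Fin 2) :
    Θ × Θ × Z × (Fin N → U) × Fin N × Fin 2 :=
  match ξ with
  | (θ, ϑ, z, 𝔲, k, c) =>
    (ϑ, θ, (φ θ ϑ (z, 𝔲 k)).1, Function.update 𝔲 k (φ θ ϑ (z, 𝔲 k)).2, k, 1 - c)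

/-- The MHAAR acceptance ratio `r̊(ξ)`: the averaged ratio `r^N_𝔲(θ,ϑ,z)` if `c = 1`,
and `1 / r^N_{𝔲'}(ϑ,θ,z')` with `(ϑ,θ,z',𝔲',k,1) = φ*(ξ)` if `c = 2`. -/
noncomputable def rMHAAR (N : ℕ) (π : Θ → Z → ℝ) (q : Θ → Θ → ℝ)
    (Q : Θ → Θ → Z → U → ℝ) (φ : Θ → Θ → Z × U → Z × U)
    (ξ : Θ × Θ × Z × (Fin N → U) × Fin N × Fin 2) : ℝ :=
  match ξ with
  | (θ, ϑ, z, 𝔲, k, c) =>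
    if c = 0 then rAvg N π q Q φ θ ϑ z 𝔲
    else
      (rAvg N π q Q φ ϑ θ (φ θ ϑ (z, 𝔲 k)).1
          (Function.update 𝔲 k (φ θ ϑ (z, 𝔲 k)).2))⁻¹

lemma rU_pos {π : Θ → Z → ℝ} {q : Θ → Θ → ℝ} {Q : Θ → Θ → Z → U → ℝ}
    {φ : Θ → Θ → Z × U → Z × U}
    (hπpos : ∀ θ z, 0 < π θ z) (hqpos : ∀ θ ϑ, 0 < q θ ϑ)
    (hQpos : ∀ θ ϑ z u, 0 < Q θ ϑ z u) (θ ϑ : Θ) (z : Z) (u : U) :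
    0 < rU π q Q φ θ ϑ z u := by
  unfold rU
  exact div_pos (mul_pos (mul_pos (hπpos _ _) (hqpos _ _)) (hQpos _ _ _ _))
    (mul_pos (mul_pos (hπpos _ _) (hqpos _ _)) (hQpos _ _ _ _))

lemma rAvg_pos {N : ℕ} (hN : 1 ≤ N) {π : Θ → Z → ℝ} {q : Θ → Θ → ℝ}
    {Q : Θ → Θ → Z → U → ℝ} {φ : Θ → Θ → Z × U → Z × U}
    (hπpos : ∀ θ z, 0 < π θ z) (hqpos : ∀ θ ϑ, 0 < q θ ϑ)
    (hQpos : ∀ θ ϑ z u, 0 < Q θ ϑ z u) (θ ϑ : Θ) (z : Z) (𝔲 : Fin N → U) :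
    0 < rAvg N π q Q φ θ ϑ z 𝔲 := by
  unfold rAvg
  have hN0 : 0 < (N : ℝ) := by exact_mod_cast Nat.lt_of_lt_of_le Nat.zero_lt_one hN
  refine mul_pos (inv_pos.2 hN0) ?_
  exact Finset.sum_pos (fun i _ => rU_pos hπpos hqpos hQpos θ ϑ z (𝔲 i))
    ⟨⟨0, hN⟩, Finset.mem_univ _⟩

/-- The map `φ*` is an involution of
`X = Θ² × Z × Uᴺ × {1,…,N} × {1,2}`, and for every `ξ = (θ,ϑ,z,𝔲,k,c) ∈ X`,
`D(φ*(ξ)) = r̊(ξ) · D(ξ)`; in particular the Metropolis–Hastings acceptance ratio of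
the MHAAR update equals the averaged acceptance ratio `r^N_𝔲(θ,ϑ,z)` when `c = 1` and
its reciprocal at the transformed point when `c = 2`. -/
theorem mhaar_involution_and_acceptance_ratio
    [MeasurableSpace Θ] [MeasurableSpace Z] [MeasurableSpace U]
    (μΘ : Measure Θ) (μZ : Measure Z) (μU : Measure U)
    [SigmaFinite μΘ] [SigmaFinite μZ] [SigmaFinite μU]
    (N : ℕ) (hN : 1 ≤ N)
    (π : Θ → Z → ℝ) (hπm : Measurable fun p : Θ × Z => π p.1 p.2)
    (hπpos : ∀ θ z, 0 < π θ z)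
    (hπ1 : ∫ p, π p.1 p.2 ∂(μΘ.prod μZ) = 1)
    (q : Θ → Θ → ℝ) (hqm : Measurable fun p : Θ × Θ => q p.1 p.2)
    (hqpos : ∀ θ ϑ, 0 < q θ ϑ) (hq1 : ∀ θ, ∫ ϑ, q θ ϑ ∂μΘ = 1)
    (Q : Θ → Θ → Z → U → ℝ)
    (hQm : Measurable fun p : Θ × Θ × Z × U => Q p.1 p.2.1 p.2.2.1 p.2.2.2)
    (hQpos : ∀ θ ϑ z u, 0 < Q θ ϑ z u)
    (hQ1 : ∀ θ ϑ z, ∫ u, Q θ ϑ z u ∂μU = 1)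
    (φ : Θ → Θ → Z × U → Z × U)
    (hφm : ∀ θ ϑ, Measurable (φ θ ϑ))
    (hφinv : ∀ θ ϑ p, φ ϑ θ (φ θ ϑ p) = p)
    (hφmp : ∀ θ ϑ, MeasurePreserving (φ θ ϑ) (μZ.prod μU) (μZ.prod μU)) :
    (∀ ξ : Θ × Θ × Z × (Fin N → U) × Fin N × Fin 2,
        phiStar N φ (phiStar N φ ξ) = ξ) ∧
      (∀ ξ : Θ × Θ × Z × (Fin N → U) × Fin N × Fin 2,
        D N π q Q φ (phiStar N φ ξ) = rMHAAR N π q Q φ ξ * D N π q Q φ ξ) := by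
  constructor
  · rintro ⟨θ, ϑ, z, 𝔲, k, c⟩
    simp only [phiStar, Function.update_self]
    have h1 : φ ϑ θ ((φ θ ϑ (z, 𝔲 k)).1, (φ θ ϑ (z, 𝔲 k)).2) = (z, 𝔲 k) :=
      hφinv θ ϑ (z, 𝔲 k)
    rw [h1]
    simp only [Function.update_idem, Function.update_eq_self]
    have hc : 1 - (1 - c) = c := by fin_cases c <;> rfl
    rw [hc]
  · rintro ⟨θ, ϑ, z, 𝔲, k, c⟩
    set z' := (φ θ ϑ (z, 𝔲 k)).1 with hz'
    set u' := (φ θ ϑ (z, 𝔲 k)).2 with hu'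
    have hinv : φ ϑ θ (z', u') = (z, 𝔲 k) := hφinv θ ϑ (z, 𝔲 k)
    have hA : (0:ℝ) < π θ z * q θ ϑ * Q θ ϑ z (𝔲 k) :=
      mul_pos (mul_pos (hπpos _ _) (hqpos _ _)) (hQpos _ _ _ _)
    have hA' : (0:ℝ) < π ϑ z' * q ϑ θ * Q ϑ θ z' u' :=
      mul_pos (mul_pos (hπpos _ _) (hqpos _ _)) (hQpos _ _ _ _)
    have hrU : rU π q Q φ θ ϑ z (𝔲 k)
        = π ϑ z' * q ϑ θ * Q ϑ θ z' u' / (π θ z * q θ ϑ * Q θ ϑ z (𝔲 k)) := rfl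
    have hrU' : rU π q Q φ ϑ θ z' u'
        = π θ z * q θ ϑ * Q θ ϑ z (𝔲 k) / (π ϑ z' * q ϑ θ * Q ϑ θ z' u') := by
      unfold rU; rw [hinv]
    have hupd : ∀ f : U → ℝ,
        (∏ i ∈ univ.erase k, f (Function.update 𝔲 k u' i)) = ∏ i ∈ univ.erase k, f (𝔲 i) :=
      fun f => Finset.prod_congr rfl fun i hi => by
        rw [Function.update_of_ne (Finset.ne_of_mem_erase hi)]
    fin_cases c
    · -- c = 0
      have hR : rAvg N π q Q φ θ ϑ z 𝔲 ≠ 0 :=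
        (rAvg_pos hN hπpos hqpos hQpos θ ϑ z 𝔲).ne'
      simp only [phiStar, D, rMHAAR, Function.update_self, ← hz', ← hu', hinv]
      norm_num
      rw [hupd fun u => Q θ ϑ z u]
      rw [← Finset.mul_prod_erase univ (fun i => Q θ ϑ z (𝔲 i)) (Finset.mem_univ k), hrU]
      field_simp [(hπpos θ z).ne', (hqpos θ ϑ).ne', (hQpos θ ϑ z (𝔲 k)).ne']
    · -- c = 1
      have hR : rAvg N π q Q φ ϑ θ z' (Function.update 𝔲 k u') ≠ 0 :=
        (rAvg_pos hN hπpos hqpos hQpos ϑ θ z' _).ne'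
      simp only [phiStar, D, rMHAAR, Function.update_self, ← hz', ← hu']
      norm_num
      rw [← Finset.mul_prod_erase univ (fun i => Q ϑ θ z' (Function.update 𝔲 k u' i))
        (Finset.mem_univ k)]
      simp only [Function.update_self]
      rw [hupd fun u => Q ϑ θ z' u, hrU']
      field_simp [(hπpos ϑ z').ne', (hqpos ϑ θ).ne', (hQpos ϑ θ z' u').ne']

end MHAAR
end

section
/- With the notation of the context, for every particle array v ∈ Z^{T·M} and every index path k ∈ {1,…,M}^T one has η(ϑ) C_ϑ q(ϑ,θ) · π_ϑ(v^{(k)}) · Φ_{θ,ϑ}(s_{1,k}(v)) · b_{θ,ϑ}(k | s_{1,k}(v)) = r_{𝟏,v}(θ,ϑ) · η(θ) C_θ q(θ,ϑ) · π_θ(v^{(𝟏)}) · Φ_{θ,ϑ}(v) · b^{(1)}_{θ,ϑ}(k | v). Consequently the Metropolis–Hastings acceptance ratio of the MHAAR-RB update for the multiple latent variable model equals the Rao–Blackwellised averaged ratio r_{𝟏,v}(θ,ϑ) when c = 1, and equals 1/r_{k,v}(ϑ,θ) when c = 2. -/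
open MeasureTheory Finset

namespace MHAARRB4

variable {Z : Type*}

/-- The path `v^{(k)}` extracted from the particle array `v`. -/
def pathOf (n m : ℕ) (v : Fin (n + 1) → Fin (m + 1) → Z)
    (k : Fin (n + 1) → Fin (m + 1)) : Fin (n + 1) → Z := fun t => v t (k t)

/-- The constant index path `𝟏`. -/
def onePath (n m : ℕ) : Fin (n + 1) → Fin (m + 1) := fun _ => 0

/-- The swap operator `s_{1,k}` exchanging, for each `t`, the coordinates `v_t^{(1)}`
and `v_t^{(k_t)}`. -/
def swapArr (n m : ℕ) (k : Fin (n + 1) → Fin (m + 1))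
    (v : Fin (n + 1) → Fin (m + 1) → Z) : Fin (n + 1) → Fin (m + 1) → Z :=
  fun t i => v t (Equiv.swap 0 (k t) i)

/-- The proposal density `Φ_{θ,ϑ}(v) = ∏_t ∏_{i≥2} q_{t,θ,ϑ}(v_t^{(i)})`. -/
noncomputable def Phi (n m : ℕ) (qp : Fin (n + 1) → Z → ℝ)
    (v : Fin (n + 1) → Fin (m + 1) → Z) : ℝ :=
  ∏ t, ∏ i ∈ univ.erase (0 : Fin (m + 1)), qp t (v t i)

/-- Selection probabilities of the form
`∏_t [γ_t(v_t^{(k_t)})/q_t(v_t^{(k_t)})] / [∑_j γ_t(v_t^{(j)})/q_t(v_t^{(j)})]`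
(this gives `b_{θ,ϑ}` for `γ = γ_{θ,ϑ}` and `b^{(1)}_{θ,ϑ}` for `γ = γ_ϑ`). -/
noncomputable def bSel (n m : ℕ) (γ qp : Fin (n + 1) → Z → ℝ)
    (k : Fin (n + 1) → Fin (m + 1)) (v : Fin (n + 1) → Fin (m + 1) → Z) : ℝ :=
  ∏ t, (γ t (v t (k t)) / qp t (v t (k t))) / (∑ j, γ t (v t j) / qp t (v t j))

/-- The acceptance ratio `r_{z,z'}(θ,ϑ)`. -/
noncomputable def accRatio (n : ℕ) (ηθ ηϑ qθϑ qϑθ : ℝ)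
    (γθ γϑ γθϑ : Fin (n + 1) → Z → ℝ) (z z' : Fin (n + 1) → Z) : ℝ :=
  qϑθ * ηϑ / (qθϑ * ηθ) *
    ∏ t, (γθϑ t (z t) / γθ t (z t)) * (γϑ t (z' t) / γθϑ t (z' t))

/-- The Rao–Blackwellised averaged ratio `r_{l,v}(θ,ϑ) = ∑_k b_{θ,ϑ}(k|v) r_{v^{(l)},v^{(k)}}(θ,ϑ)`. -/
noncomputable def rBar (n m : ℕ) (ηθ ηϑ qθϑ qϑθ : ℝ)
    (γθ γϑ γθϑ qp : Fin (n + 1) → Z → ℝ)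
    (l : Fin (n + 1) → Fin (m + 1)) (v : Fin (n + 1) → Fin (m + 1) → Z) : ℝ :=
  ∑ k : Fin (n + 1) → Fin (m + 1),
    bSel n m γθϑ qp k v *
      accRatio n ηθ ηϑ qθϑ qϑθ γθ γϑ γθϑ (pathOf n m v l) (pathOf n m v k)

/-- The normalised density `π_θ(z) = ∏_t γ_{t,θ}(z_t) / C_θ`. -/
noncomputable def piDen (n : ℕ) (γ : Fin (n + 1) → Z → ℝ) (C : ℝ)
    (z : Fin (n + 1) → Z) : ℝ := (∏ t, γ t (z t)) / C

lemma prod_erase_swap {m : ℕ} (f : Fin (m + 1) → ℝ) (c : Fin (m + 1))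
    (hf : ∀ i, f i ≠ 0) :
    ∏ i ∈ univ.erase (0 : Fin (m + 1)), f (Equiv.swap 0 c i)
      = (∏ i, f i) / f c := by
  have h1 : f (Equiv.swap 0 c 0) *
      ∏ i ∈ univ.erase (0 : Fin (m + 1)), f (Equiv.swap 0 c i)
      = ∏ i, f (Equiv.swap 0 c i) :=
    Finset.mul_prod_erase univ (fun i => f (Equiv.swap 0 c i)) (mem_univ 0)
  have h2 : ∏ i, f (Equiv.swap 0 c i) = ∏ i, f i := Equiv.prod_comp _ f
  rw [Equiv.swap_apply_left, h2] at h1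
  rw [eq_div_iff (hf c), mul_comm]
  exact h1

lemma aux1 (g q S A c : ℝ) (hg : g ≠ 0) (hq : q ≠ 0) (hS : S ≠ 0) :
    (g / q / S) * (A * (c / g)) = A * ((c / q) / S) := by
  field_simp

lemma aux2 (a P q1 g0 q0 S Sv c0 : ℝ) (hq1 : q1 ≠ 0) (hq0 : q0 ≠ 0)
    (hS : S ≠ 0) (hSv : Sv ≠ 0) (hc0 : c0 ≠ 0) :
    a * (P / q1) * (g0 / q0 / S)
      = (g0 / c0 * (Sv / S)) * (c0 * ((P / q0) * ((a / q1) / Sv))) := by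
  field_simp

lemma auxFin (ηθ ηϑ qθϑ qϑθ Cθ Cϑ P1 P2 P3 Q1 Q2 Q3 Q4 : ℝ)
    (hηθ : ηθ ≠ 0) (hqθϑ : qθϑ ≠ 0) (hCθ : Cθ ≠ 0) (hCϑ : Cϑ ≠ 0)
    (h : P1 * P2 * P3 = Q1 * (Q2 * (Q3 * Q4))) :
    ηϑ * Cϑ * qϑθ * (P1 / Cϑ) * P2 * P3
      = qϑθ * ηϑ / (qθϑ * ηθ) * Q1 * (ηθ * Cθ * qθϑ * (Q2 / Cθ) * Q3 * Q4) := by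
  field_simp
  linear_combination (ηϑ * qϑθ) * h

/-- For every particle array `v` and index path `k`,
`η(ϑ) C_ϑ q(ϑ,θ) π_ϑ(v^{(k)}) Φ_{θ,ϑ}(s_{1,k}(v)) b_{θ,ϑ}(k|s_{1,k}(v))
  = r_{𝟏,v}(θ,ϑ) · η(θ) C_θ q(θ,ϑ) π_θ(v^{(𝟏)}) Φ_{θ,ϑ}(v) b^{(1)}_{θ,ϑ}(k|v)`;
consequently the MH acceptance ratio of the MHAAR-RB update equals `r_{𝟏,v}(θ,ϑ)`
when `c = 1` and `1/r_{k,v}(ϑ,θ)` when `c = 2`. (Here `T = n+1 ≥ 1`, `M = m+1 ≥ 1`.) -/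
theorem mhaar_rb_acceptance_identity
    [MeasurableSpace Z] (ν : Measure Z) [SigmaFinite ν] (n m : ℕ)
    (γθ γϑ γθϑ qp : Fin (n + 1) → Z → ℝ)
    (hγθm : ∀ t, Measurable (γθ t)) (hγϑm : ∀ t, Measurable (γϑ t))
    (hγθϑm : ∀ t, Measurable (γθϑ t)) (hqpm : ∀ t, Measurable (qp t))
    (hγθ : ∀ t z, 0 < γθ t z) (hγϑ : ∀ t z, 0 < γϑ t z)
    (hγθϑ : ∀ t z, 0 < γθϑ t z) (hqp : ∀ t z, 0 < qp t z)
    (ηθ ηϑ qθϑ qϑθ : ℝ)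
    (hηθ : 0 < ηθ) (hηϑ : 0 < ηϑ) (hqθϑ : 0 < qθϑ) (hqϑθ : 0 < qϑθ)
    (Cθ Cϑ : ℝ)
    (hIθ : ∀ t, Integrable (γθ t) ν) (hIϑ : ∀ t, Integrable (γϑ t) ν)
    (hCθ : Cθ = ∏ t, ∫ z, γθ t z ∂ν) (hCϑ : Cϑ = ∏ t, ∫ z, γϑ t z ∂ν)
    (hCθpos : 0 < Cθ) (hCϑpos : 0 < Cϑ)
    (v : Fin (n + 1) → Fin (m + 1) → Z) (k : Fin (n + 1) → Fin (m + 1)) :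
    ηϑ * Cϑ * qϑθ * piDen n γϑ Cϑ (pathOf n m v k) *
        Phi n m qp (swapArr n m k v) * bSel n m γθϑ qp k (swapArr n m k v)
      = rBar n m ηθ ηϑ qθϑ qϑθ γθ γϑ γθϑ qp (onePath n m) v *
          (ηθ * Cθ * qθϑ * piDen n γθ Cθ (pathOf n m v (onePath n m)) *
            Phi n m qp v * bSel n m γϑ qp k v) := by
  have hS0 : ∀ t, (∑ j, γθϑ t (v t j) / qp t (v t j)) ≠ 0 := fun t =>
    (Finset.sum_pos (fun j _ => div_pos (hγθϑ t _) (hqp t _)) univ_nonempty).ne'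
  have hSϑ0 : ∀ t, (∑ j, γϑ t (v t j) / qp t (v t j)) ≠ 0 := fun t =>
    (Finset.sum_pos (fun j _ => div_pos (hγϑ t _) (hqp t _)) univ_nonempty).ne'
  have hPhiSwap : Phi n m qp (swapArr n m k v)
      = ∏ t, ((∏ i, qp t (v t i)) / qp t (v t (k t))) := by
    unfold Phi swapArr
    exact Finset.prod_congr rfl fun t _ =>
      prod_erase_swap (fun i => qp t (v t i)) (k t) (fun i => (hqp t _).ne')
  have hPhi : Phi n m qp v = ∏ t, ((∏ i, qp t (v t i)) / qp t (v t 0)) := by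
    unfold Phi
    refine Finset.prod_congr rfl fun t _ => ?_
    rw [eq_div_iff (hqp t _).ne']
    exact Finset.prod_erase_mul univ _ (mem_univ 0)
  have hbSwap : bSel n m γθϑ qp k (swapArr n m k v)
      = ∏ t, ((γθϑ t (v t 0) / qp t (v t 0)) /
          ∑ j, γθϑ t (v t j) / qp t (v t j)) := by
    unfold bSel swapArr
    refine Finset.prod_congr rfl fun t _ => ?_
    rw [Equiv.swap_apply_right]
    congr 1
    exact Equiv.sum_comp (Equiv.swap 0 (k t)) (fun j => γθϑ t (v t j) / qp t (v t j))
  have hrBar : rBar n m ηθ ηϑ qθϑ qϑθ γθ γϑ γθϑ qp (onePath n m) v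
      = qϑθ * ηϑ / (qθϑ * ηθ) *
        ∏ t, ((γθϑ t (v t 0) / γθ t (v t 0)) *
          ((∑ j, γϑ t (v t j) / qp t (v t j)) /
            (∑ j, γθϑ t (v t j) / qp t (v t j)))) := by
    unfold rBar bSel accRatio pathOf onePath
    have step1 : ∀ k' : Fin (n + 1) → Fin (m + 1),
        (∏ t, (γθϑ t (v t (k' t)) / qp t (v t (k' t))) /
            ∑ j, γθϑ t (v t j) / qp t (v t j)) *
          (qϑθ * ηϑ / (qθϑ * ηθ) *
            ∏ t, (γθϑ t (v t 0) / γθ t (v t 0)) *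
              (γϑ t (v t (k' t)) / γθϑ t (v t (k' t))))
        = qϑθ * ηϑ / (qθϑ * ηθ) *
          ∏ t, ((γθϑ t (v t 0) / γθ t (v t 0)) *
            ((γϑ t (v t (k' t)) / qp t (v t (k' t))) /
              (∑ j, γθϑ t (v t j) / qp t (v t j)))) := by
      intro k'
      rw [mul_left_comm, ← Finset.prod_mul_distrib]
      congr 1
      exact Finset.prod_congr rfl fun t _ =>
        aux1 _ _ _ _ _ (hγθϑ t (v t (k' t))).ne' (hqp t (v t (k' t))).ne' (hS0 t)
    rw [Finset.sum_congr rfl fun k' _ => step1 k', ← Finset.mul_sum]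
    congr 1
    rw [← Fintype.piFinset_univ,
      ← Finset.prod_univ_sum (fun _ : Fin (n + 1) => (univ : Finset (Fin (m + 1))))
        (fun t j => (γθϑ t (v t 0) / γθ t (v t 0)) *
          ((γϑ t (v t j) / qp t (v t j)) / (∑ j', γθϑ t (v t j') / qp t (v t j'))))]
    refine Finset.prod_congr rfl fun t _ => ?_
    rw [← Finset.mul_sum, ← Finset.sum_div]
  rw [hPhiSwap, hPhi, hbSwap, hrBar]
  unfold piDen pathOf onePath bSel
  have hP : (∏ t, γϑ t (v t (k t))) *
        (∏ t, ((∏ i, qp t (v t i)) / qp t (v t (k t)))) *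
        (∏ t, ((γθϑ t (v t 0) / qp t (v t 0)) /
          ∑ j, γθϑ t (v t j) / qp t (v t j)))
      = (∏ t, ((γθϑ t (v t 0) / γθ t (v t 0)) *
            ((∑ j, γϑ t (v t j) / qp t (v t j)) /
              (∑ j, γθϑ t (v t j) / qp t (v t j))))) *
        ((∏ t, γθ t (v t 0)) *
          ((∏ t, ((∏ i, qp t (v t i)) / qp t (v t 0))) *
            (∏ t, ((γϑ t (v t (k t)) / qp t (v t (k t))) /
              ∑ j, γϑ t (v t j) / qp t (v t j))))) := by
    rw [← Finset.prod_mul_distrib, ← Finset.prod_mul_distrib,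
      ← Finset.prod_mul_distrib, ← Finset.prod_mul_distrib,
      ← Finset.prod_mul_distrib]
    exact Finset.prod_congr rfl fun t _ =>
      aux2 _ _ _ _ _ _ _ _ (hqp t (v t (k t))).ne' (hqp t (v t 0)).ne'
        (hS0 t) (hSϑ0 t) (hγθ t (v t 0)).ne'
  exact auxFin ηθ ηϑ qθϑ qϑθ Cθ Cϑ _ _ _ _ _ _ _
    hηθ.ne' hqθϑ.ne' hCθpos.ne' hCϑpos.ne' hP

end MHAARRB4
end
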